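/- Let A be an n-by-n weighted shift matrix (n ≥ 3) with weights a_1, …, a_n, all nonzero. Then A is reducible if and only if A has periodic weights, i.e., there exists a fixed k with 1 ≤ k ≤ ⌊n/2⌋ such that k divides n and |a_j| = |a_{k+j}| for all 1 ≤ j ≤ n−k. -/

import Mathlib

open Matrix Finset
open Fin.NatCast Fin.CommRing

/-- The n-by-n weighted shift matrix with weights `a 0, …, a (n-1)`
(representing `a_1, …, a_n`): the `(i, i+1)` entry is `a i` (cyclically). -/
def wsMatrix {n : ℕ} (a : Fin n → ℂ) : Matrix (Fin n) (Fin n) ℂ :=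
  fun i j => if (j : ℕ) = ((i : ℕ) + 1) % n then a i else 0

/-- Two square complex matrices are unitarily equivalent if `B = U* A U`
for some unitary `U`. -/
def UnitarilyEquiv {n : ℕ} (A B : Matrix (Fin n) (Fin n) ℂ) : Prop :=
  ∃ U : Matrix (Fin n) (Fin n) ℂ, U ∈ Matrix.unitaryGroup (Fin n) ℂ ∧ B = Uᴴ * A * U

/-- A square complex matrix is reducible if some orthogonal projection `P`
other than `0` and `I` commutes with it (equivalently, `A` and `Aᴴ` have a
common nontrivial invariant subspace). -/
def MatReducible {n : ℕ} (A : Matrix (Fin n) (Fin n) ℂ) : Prop :=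
  ∃ P : Matrix (Fin n) (Fin n) ℂ, P * P = P ∧ Pᴴ = P ∧ P ≠ 0 ∧ P ≠ 1 ∧ A * P = P * A

/-- The weights `a_1, …, a_n` (0-indexed as `a 0, …, a (n-1)`) are periodic with
period `k`: `1 ≤ k ≤ ⌊n/2⌋`, `k ∣ n` and `|a_j| = |a_{k+j}|` for `1 ≤ j ≤ n-k`. -/
def PeriodicWeights (n k : ℕ) (a : Fin n → ℂ) : Prop :=
  1 ≤ k ∧ k ≤ n / 2 ∧ k ∣ n ∧
    ∀ i : Fin n, ∀ h : (i : ℕ) + k < n,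
      ‖a i‖ = ‖a ⟨(i : ℕ) + k, h⟩‖
section helpers
variable {n : ℕ} [NeZero n]
lemma val_add_one (hn : 1 < n) (i : Fin n) : ((i + 1 : Fin n) : ℕ) = ((i : ℕ) + 1) % n := by
  rw [Fin.val_add, Fin.val_one', Nat.one_mod_eq_one.mpr (by omega)]
lemma ws_apply (hn : 1 < n) (a : Fin n → ℂ) (i j : Fin n) :
    wsMatrix a i j = if j = i + 1 then a i else 0 := by
  have hiff : ((j : ℕ) = ((i : ℕ) + 1) % n) ↔ j = i + 1 := by
    rw [Fin.ext_iff, val_add_one hn]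
  unfold wsMatrix
  exact if_congr hiff rfl rfl
lemma mulA (hn : 1 < n) (a : Fin n → ℂ) (P : Matrix (Fin n) (Fin n) ℂ) (i j : Fin n) :
    (wsMatrix a * P) i j = a i * P (i + 1) j := by
  rw [Matrix.mul_apply, Finset.sum_eq_single (i + 1)]
  · rw [ws_apply hn]; simp
  · intro b _ hb; rw [ws_apply hn]; simp [hb]
  · simp
lemma mulB (hn : 1 < n) (a : Fin n → ℂ) (P : Matrix (Fin n) (Fin n) ℂ) (i j : Fin n) :
    (P * wsMatrix a) i j = P i (j - 1) * a (j - 1) := by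
  rw [Matrix.mul_apply, Finset.sum_eq_single (j - 1)]
  · rw [ws_apply hn]; simp [sub_add_cancel]
  · intro b _ hb; rw [ws_apply hn]
    rw [if_neg]; · ring
    intro h; exact hb (by rw [h, add_sub_cancel_right])
  · simp
lemma wsAAH (hn : 1 < n) (a : Fin n → ℂ) :
    wsMatrix a * (wsMatrix a)ᴴ
      = Matrix.diagonal (fun i => a i * (starRingEnd ℂ) (a i)) := by
  ext i j
  rw [Matrix.mul_apply, Finset.sum_eq_single (i + 1)]
  · rw [Matrix.conjTranspose_apply, ws_apply hn, ws_apply hn]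
    by_cases h : i = j
    · simp [h, Matrix.diagonal]
    · have h2 : ¬ (i + 1 = j + 1) := fun hc => h (add_right_cancel hc)
      simp [h2, Matrix.diagonal, h]
  · intro b _ hb
    rw [ws_apply hn]; simp [hb]
  · simp
end helpers

lemma gcd_period (f : ℕ → ℝ) {n d : ℕ} (hd : 0 < d) (hdn : d < n)
    (hfn : ∀ t, f (t + n) = f t) (hfd : ∀ t, f (t + d) = f t) :
    ∀ t, f (t + Nat.gcd d n) = f t := by
  have hmuld : ∀ s t, f (t + s * d) = f t := by
    intro s
    induction s with
    | zero => simp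
    | succ s ih =>
      intro t
      rw [show t + (s + 1) * d = t + s * d + d by ring, hfd, ih]
  have hmuln : ∀ s t, f (t + s * n) = f t := by
    intro s
    induction s with
    | zero => simp
    | succ s ih =>
      intro t
      rw [show t + (s + 1) * n = t + s * n + n by ring, hfn, ih]
  have hlt : Nat.gcd d n < n := lt_of_le_of_lt (Nat.gcd_le_left _ hd) hdn
  obtain ⟨x, -, hx⟩ := Nat.exists_mul_mod_eq_gcd hlt
  intro t
  have h1 : t + x * d = t + Nat.gcd d n + (d * x / n) * n := by
    have h2 := Nat.div_add_mod (d * x) n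
    have h3 : x * d = d * x := by ring
    have h4 : n * (d * x / n) = (d * x / n) * n := by ring
    omega
  calc f (t + Nat.gcd d n) = f (t + Nat.gcd d n + (d * x / n) * n) := (hmuln _ _).symm
    _ = f (t + x * d) := by rw [← h1]
    _ = f t := hmuld _ _

lemma fwd_dir {n : ℕ} (hn : 3 ≤ n) (a : Fin n → ℂ) (ha : ∀ i, a i ≠ 0)
    (h : MatReducible (wsMatrix a)) : ∃ k, PeriodicWeights n k a := by
  haveI : NeZero n := ⟨by omega⟩
  have hn1 : 1 < n := by omega
  obtain ⟨P, hP2, hPH, hP0, hP1, hC⟩ := h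
  have key : ∀ i j : Fin n, a i * P (i + 1) (j + 1) = P i j * a j := by
    intro i j
    have h0 : (wsMatrix a * P) i (j + 1) = (P * wsMatrix a) i (j + 1) := by rw [hC]
    rwa [mulA hn1, mulB hn1, add_sub_cancel_right] at h0
  have hPAH : P * (wsMatrix a)ᴴ = (wsMatrix a)ᴴ * P := by
    have h0 := congrArg Matrix.conjTranspose hC
    rwa [Matrix.conjTranspose_mul, Matrix.conjTranspose_mul, hPH] at h0
  have hDC : Matrix.diagonal (fun i => a i * (starRingEnd ℂ) (a i)) * P
      = P * Matrix.diagonal (fun i => a i * (starRingEnd ℂ) (a i)) := by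
    rw [← wsAAH hn1 a]
    calc wsMatrix a * (wsMatrix a)ᴴ * P
        = wsMatrix a * ((wsMatrix a)ᴴ * P) := by rw [Matrix.mul_assoc]
      _ = wsMatrix a * (P * (wsMatrix a)ᴴ) := by rw [hPAH]
      _ = wsMatrix a * P * (wsMatrix a)ᴴ := by rw [Matrix.mul_assoc]
      _ = P * wsMatrix a * (wsMatrix a)ᴴ := by rw [hC]
      _ = P * (wsMatrix a * (wsMatrix a)ᴴ) := by rw [Matrix.mul_assoc]
  have habs2 : ∀ i j : Fin n, P i j ≠ 0 → ‖a i‖ = ‖a j‖ := by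
    intro i j hne
    have h0 : (Matrix.diagonal (fun i => a i * (starRingEnd ℂ) (a i)) * P) i j
        = (P * Matrix.diagonal (fun i => a i * (starRingEnd ℂ) (a i))) i j := by rw [hDC]
    rw [Matrix.diagonal_mul, Matrix.mul_diagonal] at h0
    rw [mul_comm] at h0
    have h1 : a i * (starRingEnd ℂ) (a i) = a j * (starRingEnd ℂ) (a j) :=
      mul_left_cancel₀ hne h0
    rw [Complex.mul_conj, Complex.mul_conj] at h1
    have h2 : Complex.normSq (a i) = Complex.normSq (a j) := by exact_mod_cast h1
    rw [Complex.norm_def, Complex.norm_def, h2]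
  by_cases hdiag : ∀ i j : Fin n, i ≠ j → P i j = 0
  · exfalso
    have hconst : ∀ i : Fin n, P (i + 1) (i + 1) = P i i := by
      intro i
      have h0 := key i i
      rw [mul_comm (P i i)] at h0
      exact mul_left_cancel₀ (ha i) h0
    have hall : ∀ t : ℕ, P (t : Fin n) (t : Fin n) = P 0 0 := by
      intro t
      induction t with
      | zero => simp
      | succ t ih =>
        have hc : (((t + 1 : ℕ)) : Fin n) = ((t : ℕ) : Fin n) + 1 := by push_cast; ring
        rw [hc, hconst, ih]
    have hPc : ∀ i : Fin n, P i i = P 0 0 := by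
      intro i; have h0 := hall i.val; rwa [Fin.cast_val_eq_self] at h0
    have hsq : P 0 0 * P 0 0 = P 0 0 := by
      have h0 : (P * P) 0 0 = P 0 0 := by rw [hP2]
      rwa [Matrix.mul_apply, Finset.sum_eq_single (0 : Fin n)] at h0
      · intro b _ hb; rw [hdiag 0 b (Ne.symm hb), zero_mul]
      · simp
    have hcases : P 0 0 = 0 ∨ P 0 0 = 1 := by
      have h0 : P 0 0 * (P 0 0 - 1) = 0 := by linear_combination hsq
      rcases mul_eq_zero.mp h0 with h1 | h1
      · exact Or.inl h1
      · exact Or.inr (by linear_combination h1)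
    rcases hcases with h0 | h0
    · apply hP0
      ext i j
      by_cases hij : i = j
      · subst hij; rw [hPc i, h0]; rfl
      · rw [hdiag i j hij]; rfl
    · apply hP1
      ext i j
      by_cases hij : i = j
      · subst hij; rw [hPc i, h0, Matrix.one_apply_eq]
      · rw [hdiag i j hij, Matrix.one_apply_ne hij]
  · push_neg at hdiag
    obtain ⟨i0, j0, hne0, hPne⟩ := hdiag
    set d : Fin n := j0 - i0 with hd
    have hd0 : d ≠ 0 := sub_ne_zero.mpr (Ne.symm hne0)
    have hprop : ∀ t : ℕ, P (i0 + (t : Fin n)) (j0 + (t : Fin n)) ≠ 0 := by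
      intro t
      induction t with
      | zero => simpa using hPne
      | succ t ih =>
        have hk := key (i0 + (t : Fin n)) (j0 + (t : Fin n))
        have hr : P (i0 + (t : Fin n)) (j0 + (t : Fin n)) * a (j0 + (t : Fin n)) ≠ 0 :=
          mul_ne_zero ih (ha _)
        rw [← hk] at hr
        have h3 : P (i0 + (t : Fin n) + 1) (j0 + (t : Fin n) + 1) ≠ 0 :=
          fun hz => hr (by rw [hz, mul_zero])
        have hc1 : (((t + 1 : ℕ)) : Fin n) = ((t : ℕ) : Fin n) + 1 := by push_cast; ring
        rw [hc1, ← add_assoc, ← add_assoc]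
        exact h3
    have hAll : ∀ i : Fin n, P i (i + d) ≠ 0 := by
      intro i
      have h0 := hprop ((i - i0).val)
      rw [Fin.cast_val_eq_self] at h0
      have e1 : i0 + (i - i0) = i := by ring
      have e2 : j0 + (i - i0) = i + d := by rw [hd]; ring
      rwa [e1, e2] at h0
    have habs_d : ∀ i : Fin n, ‖a i‖ = ‖a (i + d)‖ :=
      fun i => habs2 _ _ (hAll i)
    set f : ℕ → ℝ := fun t => ‖a ((t : ℕ) : Fin n)‖ with hf
    have hfn : ∀ t, f (t + n) = f t := by
      intro t
      have hc : (((t + n : ℕ)) : Fin n) = ((t : ℕ) : Fin n) := by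
        push_cast [Fin.natCast_self]; ring
      simp only [hf, hc]
    have hfd : ∀ t, f (t + d.val) = f t := by
      intro t
      have hc : (((t + d.val : ℕ)) : Fin n) = ((t : ℕ) : Fin n) + d := by
        push_cast [Fin.cast_val_eq_self]; ring
      simp only [hf, hc]
      exact (habs_d _).symm
    have hdpos : 0 < d.val := by
      rcases Nat.eq_zero_or_pos d.val with h0 | h0
      · exact absurd (Fin.ext (by simpa using h0)) hd0
      · exact h0
    have hkdvd : Nat.gcd d.val n ∣ n := Nat.gcd_dvd_right _ _
    have hk1 : 1 ≤ Nat.gcd d.val n := Nat.gcd_pos_of_pos_right _ (by omega)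
    have hkn : Nat.gcd d.val n < n := lt_of_le_of_lt (Nat.gcd_le_left _ hdpos) d.isLt
    have hk2 : Nat.gcd d.val n ≤ n / 2 := by
      obtain ⟨m, hm⟩ := hkdvd
      match m, hm with
      | 0, hm => omega
      | 1, hm => omega
      | (m + 2), hm =>
        have h5 : Nat.gcd d.val n * 2 ≤ Nat.gcd d.val n * (m + 2) :=
          Nat.mul_le_mul_left _ (by omega)
        omega
    have hfg := gcd_period f hdpos d.isLt hfn hfd
    refine ⟨Nat.gcd d.val n, hk1, hk2, hkdvd, ?_⟩
    intro i hik
    have h1 : ‖a i‖ = f i.val := by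
      simp only [hf, Fin.cast_val_eq_self]
    have h2 : ‖a ⟨i.val + Nat.gcd d.val n, hik⟩‖ = f (i.val + Nat.gcd d.val n) := by
      have hcast : (((i.val + Nat.gcd d.val n : ℕ)) : Fin n) = ⟨i.val + Nat.gcd d.val n, hik⟩ := by
        apply Fin.ext
        rw [Fin.val_natCast, Nat.mod_eq_of_lt hik]
      simp only [hf, hcast]
    rw [h1, h2, hfg i.val]

lemma prod_mod_pow {M : Type*} [CommMonoid M] (F : ℕ → M) (k : ℕ) (m : ℕ) :
    ∏ t ∈ Finset.range (m * k), F (t % k) = (∏ j ∈ Finset.range k, F j) ^ m := by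
  induction m with
  | zero => simp
  | succ m ih =>
    rw [show (m + 1) * k = m * k + k by ring, Finset.prod_range_add, ih, pow_succ]
    congr 1
    apply Finset.prod_congr rfl
    intro x hx
    rw [show m * k + x = x + m * k by ring, Nat.add_mul_mod_self_right,
      Nat.mod_eq_of_lt (Finset.mem_range.mp hx)]

lemma sum_mod_count (G : ℕ → ℂ) (k : ℕ) (m : ℕ) :
    ∑ t ∈ Finset.range (m * k), G (t % k) = (m : ℂ) * ∑ j ∈ Finset.range k, G j := by
  induction m with
  | zero => simp
  | succ m ih =>
    rw [show (m + 1) * k = m * k + k by ring, Finset.sum_range_add, ih]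
    push_cast
    have hcong : ∑ x ∈ Finset.range k, G ((m * k + x) % k) = ∑ j ∈ Finset.range k, G j :=
      Finset.sum_congr rfl (fun x hx => by
        rw [show m * k + x = x + m * k by ring, Nat.add_mul_mod_self_right,
          Nat.mod_eq_of_lt (Finset.mem_range.mp hx)])
    rw [hcong]
    ring

lemma bwd_dir {n : ℕ} (hn : 3 ≤ n) (a : Fin n → ℂ) (ha : ∀ i, a i ≠ 0)
    (k : ℕ) (hk : PeriodicWeights n k a) : MatReducible (wsMatrix a) := by
  haveI : NeZero n := ⟨by omega⟩
  have hn1 : 1 < n := by omega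
  obtain ⟨hk1, hk2, hkdvd, hper⟩ := hk
  have hkn : k < n := by
    have h0 := Nat.div_lt_self (show 0 < n by omega) (show 1 < 2 by omega)
    omega
  obtain ⟨m, hmn⟩ := hkdvd
  have hm2 : 2 ≤ m := by
    rcases m with _ | _ | m
    · simp at hmn; omega
    · simp at hmn; omega
    · omega
  have hmk : m * k = n := by rw [hmn]; ring
  have hmc0 : (m : ℂ) ≠ 0 := Nat.cast_ne_zero.mpr (by omega)
  obtain ⟨A', hA'⟩ : ∃ A' : ℕ → ℂ, A' = fun t => a ((t : ℕ) : Fin n) := ⟨_, rfl⟩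
  have hA'0 : ∀ t, A' t ≠ 0 := fun t => by rw [hA']; exact ha _
  -- step periodicity lemma
  have Hrep : ∀ s : ℕ, ∀ i : ℕ, ∀ hi : i + s * k < n,
      ‖a ⟨i + s * k, hi⟩‖ = ‖a ⟨i, by omega⟩‖ := by
    intro s
    induction s with
    | zero =>
      intro i hi
      congr 1
      apply congrArg
      exact Fin.ext (by simp)
    | succ s ih =>
      intro i hi
      have h1 : i + s * k < n := by
        have : s * k < (s + 1) * k := by
          have : (s + 1) * k = s * k + k := by ring
          omega
        omega
      have h2 : (i + s * k) + k < n := by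
        have : (s + 1) * k = s * k + k := by ring
        omega
      have h3 := hper ⟨i + s * k, h1⟩ (by simpa using h2)
      have h4 : ‖a ⟨i + (s + 1) * k, hi⟩‖
          = ‖a ⟨i + s * k + k, h2⟩‖ := by
        congr 1
        apply congrArg
        apply Fin.ext
        simp; ring
      rw [h4, ← h3]
      exact ih i h1
  -- cyclic k-periodicity of |A'|
  have habs_cyc : ∀ t, ‖A' (t + k)‖ = ‖A' t‖ := by
    intro t
    have hjn : t % n < n := Nat.mod_lt _ (by omega)
    have ht : A' t = a ⟨t % n, hjn⟩ := by
      simp only [hA']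
      exact congrArg a (Fin.ext (by simp [Fin.val_natCast]))
    have htk : ((t + k) % n) = (t % n + k) % n := by
      conv_lhs => rw [Nat.add_mod, Nat.mod_eq_of_lt hkn]
    have htk2 : A' (t + k) = a ⟨(t % n + k) % n, Nat.mod_lt _ (by omega)⟩ := by
      simp only [hA']
      exact congrArg a (Fin.ext (by rw [Fin.val_natCast, htk]))
    rcases Nat.lt_or_ge (t % n + k) n with h | h
    · rw [ht, htk2]
      have h5 := hper ⟨t % n, hjn⟩ (by simpa using h)
      have h6 : ‖a ⟨(t % n + k) % n, Nat.mod_lt _ (by omega)⟩‖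
          = ‖a ⟨t % n + k, h⟩‖ := by
        congr 1
        apply congrArg
        exact Fin.ext (by simp [Nat.mod_eq_of_lt h])
      rw [h6, ← h5]
    · rw [ht, htk2]
      have hmod : (t % n + k) % n = t % n + k - n := by
        rw [Nat.mod_eq_sub_mod (by omega), Nat.mod_eq_of_lt (by omega)]
      have h5 : (m - 1) * k + k = m * k := by
        have hm1 : m - 1 + 1 = m := by omega
        calc (m - 1) * k + k = ((m - 1) + 1) * k := by ring
          _ = m * k := by rw [hm1]
      have hidx : (t % n + k - n) + (m - 1) * k = t % n := by omega
      have h6 : ‖a ⟨(t % n + k - n) + (m - 1) * k, by omega⟩‖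
          = ‖a ⟨t % n + k - n, by omega⟩‖ := Hrep (m - 1) _ _
      have h7 : ‖a ⟨(t % n + k) % n, Nat.mod_lt _ (by omega)⟩‖
          = ‖a ⟨t % n + k - n, by omega⟩‖ := by
        congr 1
        apply congrArg
        exact Fin.ext (by simp [hmod])
      have h8 : ‖a ⟨(t % n + k - n) + (m - 1) * k, by omega⟩‖
          = ‖a ⟨t % n, hjn⟩‖ := by
        congr 1
        apply congrArg
        exact Fin.ext (by simp [hidx])
      rw [h7, ← h6, h8]
  have habs_mod : ∀ t, ‖A' (t % k)‖ = ‖A' t‖ := by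
    have hmulk : ∀ s t : ℕ, ‖A' (t + s * k)‖ = ‖A' t‖ := by
      intro s
      induction s with
      | zero => simp
      | succ s ih =>
        intro t
        rw [show t + (s + 1) * k = t + s * k + k by ring, habs_cyc, ih]
    intro t
    conv_rhs => rw [← Nat.mod_add_div' t k]
    exact (hmulk (t / k) (t % k)).symm
  obtain ⟨c, hcdef⟩ : ∃ c : ℂ, c = ∏ i : Fin n, a i := ⟨_, rfl⟩
  have hc : c ≠ 0 := by
    rw [hcdef]
    exact Finset.prod_ne_zero_iff.mpr fun i _ => ha i
  have hcA : ∏ t ∈ Finset.range n, A' t = c := by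
    rw [hcdef, ← Fin.prod_univ_eq_prod_range]
    apply Finset.prod_congr rfl
    intro i _
    simp only [hA', Fin.cast_val_eq_self]
  obtain ⟨den, hdendef⟩ : ∃ den : ℂ, den = ∏ j ∈ Finset.range k, A' j := ⟨_, rfl⟩
  have hden0 : den ≠ 0 := by
    rw [hdendef]
    exact Finset.prod_ne_zero_iff.mpr fun j _ => hA'0 j
  obtain ⟨ζ, hζ⟩ := IsAlgClosed.exists_pow_nat_eq (c / den ^ m) (show 0 < m by omega)
  have hdenabs : ‖den‖ = ∏ j ∈ Finset.range k, ‖A' j‖ := by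
    rw [hdendef, norm_prod]
  have hcabs : ‖c‖ = (∏ j ∈ Finset.range k, ‖A' j‖) ^ m := by
    rw [← hcA, norm_prod]
    have h0 : ∏ t ∈ Finset.range n, ‖A' t‖
        = ∏ t ∈ Finset.range (m * k), ‖A' (t % k)‖ := by
      rw [hmk]
      exact Finset.prod_congr rfl (fun t _ => (habs_mod t).symm)
    rw [h0, prod_mod_pow (fun j => ‖A' j‖) k m]
  have hζ1 : ‖ζ‖ = 1 := by
    have h0 : ‖ζ‖ ^ m = 1 := by
      rw [← norm_pow, hζ, norm_div, norm_pow, hcabs, ← hdenabs, div_self]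
      exact pow_ne_zero _ (norm_ne_zero_iff.mpr hden0)
    have h1 : (0:ℝ) ≤ ‖ζ‖ := norm_nonneg _
    rcases lt_trichotomy (‖ζ‖) 1 with h2 | h2 | h2
    · have h3 := pow_lt_one₀ h1 h2 (show m ≠ 0 by omega)
      rw [h0] at h3
      exact absurd h3 (lt_irrefl _)
    · exact h2
    · have h3 := one_lt_pow₀ h2 (show m ≠ 0 by omega)
      rw [h0] at h3
      exact absurd h3 (lt_irrefl _)
  have hζ0 : ζ ≠ 0 := by
    intro h
    rw [h] at hζ1
    simp at hζ1
  obtain ⟨F, hFdef⟩ : ∃ F : ℕ → ℂ, F = fun j => if j = k - 1 then ζ * A' j else A' j := ⟨_, rfl⟩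
  obtain ⟨b, hbdef⟩ : ∃ b : ℕ → ℂ, b = fun t => F (t % k) := ⟨_, rfl⟩
  have hFabs : ∀ j, ‖F j‖ = ‖A' j‖ := by
    intro j
    by_cases h : j = k - 1 <;> simp [hFdef, h, norm_mul, hζ1]
  have hbabs : ∀ t, ‖b t‖ = ‖A' t‖ := by
    intro t
    rw [hbdef]
    simp only
    rw [hFabs, habs_mod]
  have hb0 : ∀ t, b t ≠ 0 := by
    intro t h
    have := hbabs t
    rw [h] at this
    simp at this
    exact hA'0 t (norm_eq_zero.mp this.symm)
  have hFprod : ∏ j ∈ Finset.range k, F j = ζ * den := by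
    have h0 : ∀ j, F j = (if j = k - 1 then ζ else 1) * A' j := by
      intro j
      by_cases h : j = k - 1 <;> simp [hFdef, h]
    rw [Finset.prod_congr rfl (fun j _ => h0 j), Finset.prod_mul_distrib,
      Finset.prod_ite_eq' (Finset.range k) (k - 1) (fun _ => ζ),
      if_pos (Finset.mem_range.mpr (by omega)), hdendef]
  have hbprod : ∏ t ∈ Finset.range n, b t = c := by
    have hstep : ∏ t ∈ Finset.range n, b t = ∏ t ∈ Finset.range (m * k), F (t % k) := by
      rw [hmk]
      exact Finset.prod_congr rfl (fun t _ => by rw [hbdef])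
    calc ∏ t ∈ Finset.range n, b t = ∏ t ∈ Finset.range (m * k), F (t % k) := hstep
      _ = (∏ j ∈ Finset.range k, F j) ^ m := prod_mod_pow F k m
      _ = ζ ^ m * den ^ m := by rw [hFprod, mul_pow]
      _ = c := by rw [hζ, div_mul_cancel₀ _ (pow_ne_zero _ hden0)]
  obtain ⟨u, hudef⟩ : ∃ u : ℕ → ℂ, u = fun t => ∏ s ∈ Finset.range t, (b s / A' s) := ⟨_, rfl⟩
  have hu0 : u 0 = 1 := by simp [hudef]
  have huabs : ∀ t, ‖u t‖ = 1 := by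
    intro t
    rw [hudef]
    simp only
    rw [norm_prod]
    apply Finset.prod_eq_one
    intro s _
    rw [norm_div, hbabs, div_self (norm_ne_zero_iff.mpr (hA'0 s))]
  have hune : ∀ t, u t ≠ 0 := by
    intro t h
    have := huabs t
    rw [h] at this
    simp at this
  have huconj : ∀ t, (starRingEnd ℂ) (u t) = (u t)⁻¹ := by
    intro t
    apply eq_inv_of_mul_eq_one_left
    rw [mul_comm, Complex.mul_conj, Complex.normSq_eq_norm_sq, huabs]
    norm_num
  have hrel : ∀ t, A' t * u (t + 1) = b t * u t := by
    intro t
    rw [hudef]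
    simp only
    rw [Finset.prod_range_succ]
    have h9 : A' t * ((∏ s ∈ Finset.range t, b s / A' s) * (b t / A' t))
        = (b t / A' t * A' t) * ∏ s ∈ Finset.range t, b s / A' s := by ring
    rw [h9, div_mul_cancel₀ _ (hA'0 t)]
  have hun1 : u n = 1 := by
    rw [hudef]
    simp only
    rw [Finset.prod_div_distrib, hbprod, hcA, div_self hc]
  have Rel1 : ∀ x : Fin n, a x * u ((x + 1 : Fin n) : ℕ) = b (x : ℕ) * u (x : ℕ) := by
    intro x
    have hax : a x = A' (x : ℕ) := by simp only [hA', Fin.cast_val_eq_self]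
    rw [val_add_one hn1]
    rcases Nat.lt_or_ge ((x : ℕ) + 1) n with h | h
    · rw [Nat.mod_eq_of_lt h, hax]
      exact hrel (x : ℕ)
    · have hx1 : (x : ℕ) + 1 = n := by have := x.isLt; omega
      have h0 := hrel (x : ℕ)
      rw [hx1, hun1, mul_one] at h0
      rw [hx1, Nat.mod_self, hu0, mul_one, hax]
      exact h0
  have hbmod : ∀ s t : ℕ, s % k = t % k → b s = b t := by
    intro s t h
    rw [hbdef]
    simp only [h]
  obtain ⟨P, hPdef⟩ : ∃ P : Matrix (Fin n) (Fin n) ℂ, P = Matrix.of (fun i j : Fin n =>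
    if (i : ℕ) % k = (j : ℕ) % k
      then (m : ℂ)⁻¹ * (u (i : ℕ) * (starRingEnd ℂ) (u (j : ℕ))) else 0) := ⟨_, rfl⟩
  have hPapp : ∀ i j : Fin n, P i j =
      if (i : ℕ) % k = (j : ℕ) % k
        then (m : ℂ)⁻¹ * (u (i : ℕ) * (starRingEnd ℂ) (u (j : ℕ))) else 0 := by
    intro i j
    rw [hPdef]
    rfl
  have hcount : ∀ r, r < k →
      (∑ l : Fin n, (if (l : ℕ) % k = r then (1 : ℂ) else 0)) = (m : ℂ) := by
    intro r hr
    have h0 : (∑ l : Fin n, if (l : ℕ) % k = r then (1 : ℂ) else 0)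
        = ∑ t ∈ Finset.range n, (if t % k = r then (1 : ℂ) else 0) := by
      rw [← Fin.sum_univ_eq_sum_range (fun t : ℕ => if t % k = r then (1 : ℂ) else 0) n]
    rw [h0]
    have h1 : ∑ t ∈ Finset.range n, (if t % k = r then (1 : ℂ) else 0)
        = ∑ t ∈ Finset.range (m * k), (fun j => if j = r then (1 : ℂ) else 0) (t % k) := by
      rw [hmk]
    have h2 := sum_mod_count (fun j => if j = r then (1 : ℂ) else 0) k m
    rw [h1, h2, Finset.sum_ite_eq' (Finset.range k) r (fun _ => (1 : ℂ)),
      if_pos (Finset.mem_range.mpr hr), mul_one]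
  refine ⟨P, ?_, ?_, ?_, ?_, ?_⟩
  · -- P * P = P
    ext i j
    rw [Matrix.mul_apply]
    by_cases hij : (i : ℕ) % k = (j : ℕ) % k
    · have hterm : ∀ l : Fin n, P i l * P l j =
          (if (l : ℕ) % k = (i : ℕ) % k
            then ((m : ℂ)⁻¹ * (m : ℂ)⁻¹) * (u (i : ℕ) * (starRingEnd ℂ) (u (j : ℕ))) else 0) := by
        intro l
        by_cases hl : (l : ℕ) % k = (i : ℕ) % k
        · rw [if_pos hl, hPapp, hPapp, if_pos hl.symm, if_pos (hl.trans hij)]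
          have h2 : (starRingEnd ℂ) (u (l : ℕ)) * u (l : ℕ) = 1 := by
            rw [huconj, inv_mul_cancel₀ (hune _)]
          linear_combination ((m : ℂ)⁻¹ * (m : ℂ)⁻¹ * u (i : ℕ) * (starRingEnd ℂ) (u (j : ℕ))) * h2
        · rw [if_neg hl, hPapp, if_neg (fun h => hl h.symm), zero_mul]
      rw [Finset.sum_congr rfl (fun l _ => hterm l)]
      have h3 : ∑ l : Fin n, (if (l : ℕ) % k = (i : ℕ) % k
            then ((m : ℂ)⁻¹ * (m : ℂ)⁻¹) * (u (i : ℕ) * (starRingEnd ℂ) (u (j : ℕ))) else 0)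
          = (((m : ℂ)⁻¹ * (m : ℂ)⁻¹) * (u (i : ℕ) * (starRingEnd ℂ) (u (j : ℕ))))
            * ∑ l : Fin n, (if (l : ℕ) % k = (i : ℕ) % k then (1 : ℂ) else 0) := by
        rw [Finset.mul_sum]
        apply Finset.sum_congr rfl
        intro l _
        by_cases hl : (l : ℕ) % k = (i : ℕ) % k <;> simp [hl]
      rw [h3, hcount ((i : ℕ) % k) (Nat.mod_lt _ (by omega)), hPapp, if_pos hij]
      field_simp
    · have hz : P i j = 0 := by rw [hPapp, if_neg hij]
      rw [hz]
      apply Finset.sum_eq_zero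
      intro l _
      by_cases hl : (i : ℕ) % k = (l : ℕ) % k
      · have : P l j = 0 := by
          rw [hPapp, if_neg (fun h => hij (hl.trans h))]
        rw [this, mul_zero]
      · have : P i l = 0 := by rw [hPapp, if_neg hl]
        rw [this, zero_mul]
  · -- Pᴴ = P
    ext i j
    rw [Matrix.conjTranspose_apply, hPapp, hPapp]
    by_cases h : (i : ℕ) % k = (j : ℕ) % k
    · rw [if_pos h, if_pos h.symm]
      simp only [RCLike.star_def]
      rw [_root_.map_mul, _root_.map_mul, map_inv₀, Complex.conj_natCast, Complex.conj_conj]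
      ring
    · rw [if_neg h, if_neg (fun h2 => h h2.symm)]
      simp
  · -- P ≠ 0
    intro h
    have h0 : P 0 0 = 0 := by rw [h]; rfl
    rw [hPapp] at h0
    simp only [Fin.val_zero, if_pos rfl, hu0] at h0
    rw [_root_.map_one, mul_one, mul_one] at h0
    exact hmc0 (by simpa [inv_eq_zero] using h0)
  · -- P ≠ 1
    intro h
    have hne : (⟨0, by omega⟩ : Fin n) ≠ ⟨k, hkn⟩ := by
      simp only [ne_eq, Fin.ext_iff]
      omega
    have h0 : P ⟨0, by omega⟩ ⟨k, hkn⟩ = 0 := by rw [h]; exact Matrix.one_apply_ne hne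
    have hcond : (((⟨0, by omega⟩ : Fin n) : ℕ)) % k = (((⟨k, hkn⟩ : Fin n) : ℕ)) % k := by
      show 0 % k = k % k
      simp
    rw [hPapp, if_pos hcond] at h0
    rcases mul_eq_zero.mp h0 with h1 | h1
    · exact (inv_ne_zero hmc0) h1
    · rcases mul_eq_zero.mp h1 with h2 | h2
      · exact hune _ h2
      · rw [huconj] at h2
        exact hune _ (inv_eq_zero.mp h2)
  · -- A * P = P * A
    ext i j
    rw [mulA hn1, mulB hn1]
    have hlj : (j - 1) + 1 = j := sub_add_cancel j 1
    have hmod1 : ((i + 1 : Fin n) : ℕ) % k = ((i : ℕ) + 1) % k := by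
      rw [val_add_one hn1]
      exact Nat.mod_mod_of_dvd _ ⟨m, hmn⟩
    have hmodj : (j : ℕ) % k = (((j - 1 : Fin n) : ℕ) + 1) % k := by
      conv_lhs => rw [← hlj]
      rw [val_add_one hn1]
      exact Nat.mod_mod_of_dvd _ ⟨m, hmn⟩
    have hiff : (((i + 1 : Fin n) : ℕ) % k = (j : ℕ) % k)
        ↔ ((i : ℕ) % k = ((j - 1 : Fin n) : ℕ) % k) := by
      rw [hmod1, hmodj]
      constructor
      · intro h
        exact Nat.ModEq.add_right_cancel' 1 h
      · intro h
        exact Nat.ModEq.add_right 1 h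
    by_cases hcond : (i : ℕ) % k = ((j - 1 : Fin n) : ℕ) % k
    · have hcond' := hiff.mpr hcond
      rw [hPapp, hPapp, if_pos hcond', if_pos hcond]
      have e1 := Rel1 i
      have e2 := Rel1 (j - 1)
      rw [hlj] at e2
      have hb : b (i : ℕ) = b ((j - 1 : Fin n) : ℕ) := hbmod _ _ hcond
      have hj0 : u (j : ℕ) ≠ 0 := hune _
      have hl0 : u ((j - 1 : Fin n) : ℕ) ≠ 0 := hune _
      have ea : a (j - 1) = b ((j - 1 : Fin n) : ℕ) * u ((j - 1 : Fin n) : ℕ) / u (j : ℕ) :=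
        (eq_div_iff hj0).mpr e2
      rw [huconj, huconj, ea, ← hb]
      calc a i * ((m : ℂ)⁻¹ * (u ((i + 1 : Fin n) : ℕ) * (u (j : ℕ))⁻¹))
          = (m : ℂ)⁻¹ * ((a i * u ((i + 1 : Fin n) : ℕ)) * (u (j : ℕ))⁻¹) := by ring
        _ = (m : ℂ)⁻¹ * ((b (i : ℕ) * u (i : ℕ)) * (u (j : ℕ))⁻¹) := by rw [e1]
        _ = (m : ℂ)⁻¹ * (u (i : ℕ) * (u ((j - 1 : Fin n) : ℕ))⁻¹)
            * (b (i : ℕ) * u ((j - 1 : Fin n) : ℕ) / u (j : ℕ)) := by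
          field_simp
    · have hcond' := fun h => hcond (hiff.mp h)
      rw [hPapp, hPapp, if_neg hcond', if_neg hcond]
      simp

theorem stmt10 (n : ℕ) (hn : 3 ≤ n) (a : Fin n → ℂ) (ha : ∀ i, a i ≠ 0) :
    MatReducible (wsMatrix a) ↔ ∃ k : ℕ, PeriodicWeights n k a := by
  constructor
  · exact fun h => fwd_dir hn a ha h
  · rintro ⟨k, hk⟩
    exact bwd_dir hn a ha k hk
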